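/- Let k be a field of characteristic p > 0, R = k[x_1,…,x_n] graded by total degree, and m = (x_1,…,x_n) the maximal ideal generated by the variables. Let M be a ℤ-graded R-module admitting a degree-preserving R-linear isomorphism θ : M → F^{*1}(M) (i.e., M is a graded F-module). Then every homogeneous element x ∈ M_i with m·x = 0 and i ≠ −n is zero; that is, the socle of M is concentrated in degree −n. -/

import Mathlib

open MvPolynomial TensorProduct

noncomputable section

/-- The target copy of `R = k[x₁,…,xₙ]`, regarded as an algebra over `R`
via the `l`-th iterate of the Frobenius, `φ_l : r ↦ r ^ (p ^ l)`. -/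
def FrobTarget (k : Type) [Field k] (n p l : ℕ) : Type := MvPolynomial (Fin n) k

instance (k : Type) [Field k] (n p l : ℕ) : CommRing (FrobTarget k n p l) :=
  inferInstanceAs (CommRing (MvPolynomial (Fin n) k))

/-- `φ_l : R → R`, `r ↦ r ^ (p ^ l)`, viewed as a ring homomorphism into the target copy. -/
def frobHom (k : Type) [Field k] (n p l : ℕ) [Fact p.Prime] [CharP k p] :
    MvPolynomial (Fin n) k →+* FrobTarget k n p l :=
  iterateFrobenius (MvPolynomial (Fin n) k) p l

instance (k : Type) [Field k] (n p l : ℕ) [Fact p.Prime] [CharP k p] :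
    Algebra (MvPolynomial (Fin n) k) (FrobTarget k n p l) :=
  (frobHom k n p l).toAlgebra

/-- The Frobenius base change `F^{*l}(N) = R ⊗_{φ_l} N`:  the tensor product in which the
left-hand copy of `R` is a right `R`-module via `φ_l`, with `R` acting through the left factor. -/
def Fstar (k : Type) [Field k] (n p l : ℕ) [Fact p.Prime] [CharP k p]
    (N : Type) [AddCommGroup N] [Module (MvPolynomial (Fin n) k) N] : Type :=
  FrobTarget k n p l ⊗[MvPolynomial (Fin n) k] N

instance (k : Type) [Field k] (n p l : ℕ) [Fact p.Prime] [CharP k p]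
    (N : Type) [AddCommGroup N] [Module (MvPolynomial (Fin n) k) N] :
    AddCommGroup (Fstar k n p l N) :=
  inferInstanceAs (AddCommGroup (FrobTarget k n p l ⊗[MvPolynomial (Fin n) k] N))

/-- `R` acts on `F^{*l}(N)` through the left factor. -/
instance (k : Type) [Field k] (n p l : ℕ) [Fact p.Prime] [CharP k p]
    (N : Type) [AddCommGroup N] [Module (MvPolynomial (Fin n) k) N] :
    Module (MvPolynomial (Fin n) k) (Fstar k n p l N) :=
  inferInstanceAs
    (Module (FrobTarget k n p l) (FrobTarget k n p l ⊗[MvPolynomial (Fin n) k] N))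

/-- The canonical identification of `R` with the target copy of `R`. -/
def toT (k : Type) [Field k] (n p l : ℕ) (r : MvPolynomial (Fin n) k) :
    FrobTarget k n p l := r

/-- Elementary tensors `b ⊗ y` in `F^{*l}(N)`. -/
def tensorMk (k : Type) [Field k] (n p l : ℕ) [Fact p.Prime] [CharP k p]
    (N : Type) [AddCommGroup N] [Module (MvPolynomial (Fin n) k) N]
    (b : FrobTarget k n p l) (y : N) : Fstar k n p l N :=
  b ⊗ₜ[MvPolynomial (Fin n) k] y

/-- The monomial `e_ī = x₁^{i₁} ⋯ xₙ^{iₙ}` in the target copy of `R`. -/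
def eMono (k : Type) [Field k] (n p l : ℕ) (v : Fin n → ℕ) : FrobTarget k n p l :=
  toT k n p l (∏ j, X j ^ v j)

/-- The degree-`d` component of `F^{*l}(N)` for a `ℤ`-graded module `N`:  the additive span of
the elementary tensors `r ⊗ y` with `r ∈ R_a`, `y ∈ N_b` and `a + p^l • b = d`. -/
def FstarGrade (k : Type) [Field k] (n p l : ℕ) [Fact p.Prime] [CharP k p]
    (N : Type) [AddCommGroup N] [Module (MvPolynomial (Fin n) k) N]
    (𝓝 : ℤ → AddSubgroup N) (d : ℤ) : AddSubgroup (Fstar k n p l N) :=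
  AddSubgroup.closure { z | ∃ (a : ℕ) (b : ℤ) (r : MvPolynomial (Fin n) k) (y : N),
    r ∈ homogeneousSubmodule (Fin n) k a ∧ y ∈ 𝓝 b ∧ (a : ℤ) + (p : ℤ) ^ l * b = d ∧
    z = tensorMk k n p l N (toT k n p l r) y }

/-- The top multi-index `(p^l − 1, …, p^l − 1)`. -/
def topIdx (n p l : ℕ) [Fact p.Prime] : Fin n → Fin (p ^ l) :=
  fun _ => ⟨p ^ l - 1, Nat.sub_lt (pow_pos (Fact.out : p.Prime).pos l) one_pos⟩

open MvPolynomial TensorProduct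

noncomputable section
namespace S5

/-- `k` with the `k`-module structure twisted by Frobenius: `s • a = s^p * a`. -/
def kT (k : Type) (_p : ℕ) : Type := k

instance (k : Type) [Field k] (p : ℕ) : AddCommGroup (kT k p) :=
  inferInstanceAs (AddCommGroup k)
instance (k : Type) [Field k] (p : ℕ) [Fact p.Prime] [CharP k p] : Module k (kT k p) :=
  Module.compHom k (frobenius k p)

variable (k : Type) [Field k] (p : ℕ) [Fact p.Prime] [CharP k p]

lemma kT_smul (s : k) (a : kT k p) : s • a = (s ^ p * (show k from a) : k) := rfl

def bIx : Type := Module.Basis.ofVectorSpaceIndex k (kT k p)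

def bas : Module.Basis (bIx k p) k (kT k p) := Module.Basis.ofVectorSpace k (kT k p)

def kappa (b : bIx k p) : k →+ k :=
  (Finsupp.applyAddHom b).comp
    (((bas k p).repr : kT k p →ₗ[k] (bIx k p →₀ k)).toAddMonoidHom)

lemma kappa_apply (b : bIx k p) (c : k) :
    kappa k p b c = (bas k p).repr (show kT k p from c) b := rfl

lemma kappa_pmul (b : bIx k p) (s c : k) :
    kappa k p b (s ^ p * c) = s * kappa k p b c := by
  have h : (show kT k p from s ^ p * c) = s • (show kT k p from c) := rfl
  rw [kappa_apply, kappa_apply, h, map_smul, Finsupp.smul_apply, smul_eq_mul]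

/-- The basis vectors of `kT` viewed in `k`. -/
def basK (b : bIx k p) : k := bas k p b

lemma sum_kappa (c : k) :
    (((bas k p).repr (show kT k p from c)).sum
      fun b s => s ^ p * basK k p b) = c := by
  conv_rhs => rw [show c = show k from ((show kT k p from c) : kT k p) from rfl]
  conv_rhs => rw [← (bas k p).linearCombination_repr (show kT k p from c)]
  rw [Finsupp.linearCombination_apply]
  rfl

variable {p : ℕ}

lemma succ_mod (hp : 0 < p) (u : ℕ) : (u + 1) % p = (u % p + 1) % p := by
  conv_lhs => rw [← Nat.mod_add_div u p]
  rw [Nat.add_right_comm, Nat.add_mul_mod_self_left]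

lemma succ_div' (hp : 0 < p) (u : ℕ) : (u + 1) / p = (u % p + 1) / p + u / p := by
  conv_lhs => rw [← Nat.mod_add_div u p]
  rw [Nat.add_right_comm, Nat.add_mul_div_left _ _ hp]

lemma mod_succ_iff₁ (hp : 1 < p) {u a : ℕ} (h1 : 1 ≤ a) (h2 : a < p) :
    (u + 1) % p = a ↔ u % p = a - 1 := by
  rw [succ_mod (by omega) u]
  have hm : u % p < p := Nat.mod_lt _ (by omega)
  rcases eq_or_lt_of_le (Nat.succ_le_of_lt hm) with h | h
  · rw [show u % p + 1 = p from h, Nat.mod_self]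
    omega
  · rw [Nat.mod_eq_of_lt h]
    omega

lemma mod_succ_iff₀ (hp : 1 < p) {u : ℕ} :
    (u + 1) % p = 0 ↔ u % p = p - 1 := by
  rw [succ_mod (by omega) u]
  have hm : u % p < p := Nat.mod_lt _ (by omega)
  rcases eq_or_lt_of_le (Nat.succ_le_of_lt hm) with h | h
  · rw [show u % p + 1 = p from h, Nat.mod_self]
    omega
  · rw [Nat.mod_eq_of_lt h]
    omega

lemma div_succ_ne (hp : 1 < p) {u : ℕ} (h : u % p ≠ p - 1) : (u + 1) / p = u / p := by
  rw [succ_div' (by omega) u]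
  have hm : u % p < p := Nat.mod_lt _ (by omega)
  rw [Nat.div_eq_of_lt (by omega)]
  omega

lemma div_succ_eq (hp : 1 < p) {u : ℕ} (h : u % p = p - 1) : (u + 1) / p = u / p + 1 := by
  rw [succ_div' (by omega) u, h]
  rw [show p - 1 + 1 = p by omega, Nat.div_self (by omega)]
  omega
variable (k : Type) [Field k] (p : ℕ) [Fact p.Prime] [CharP k p] (n : ℕ)
variable (M : Type) [AddCommGroup M] [Module (MvPolynomial (Fin n) k) M]

/-- Pointwise division by `p` of a multi-index. -/
def divp (u : Fin n →₀ ℕ) : Fin n →₀ ℕ := Finsupp.mapRange (· / p) (Nat.zero_div p) u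

lemma divp_apply (u : Fin n →₀ ℕ) (j : Fin n) : divp p n u j = u j / p :=
  Finsupp.mapRange_apply

/-- The congruence condition `u ≡ v (mod p)` componentwise. -/
abbrev cnd (v : Fin n → Fin p) (u : Fin n →₀ ℕ) : Prop := ∀ j, u j % p = (v j : ℕ)

def innerHom (v : Fin n → Fin p) (b : bIx k p) (u : Fin n →₀ ℕ) : k →+ (M →+ M) :=
  if cnd p n v u then
    (smulAddHom (MvPolynomial (Fin n) k) M).comp
      ((monomial (divp p n u) : k →ₗ[k] MvPolynomial (Fin n) k).toAddMonoidHom.comp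
        (kappa k p b))
  else 0

lemma innerHom_apply_pos {v : Fin n → Fin p} (b : bIx k p) {u : Fin n →₀ ℕ}
    (h : cnd p n v u) (c : k) (y : M) :
    innerHom k p n M v b u c y = (monomial (divp p n u) (kappa k p b c)) • y := by
  rw [innerHom, if_pos h]; rfl

lemma innerHom_apply_neg {v : Fin n → Fin p} (b : bIx k p) {u : Fin n →₀ ℕ}
    (h : ¬ cnd p n v u) (c : k) (y : M) :
    innerHom k p n M v b u c y = 0 := by
  rw [innerHom, if_neg h]; rfl

def tauAux (v : Fin n → Fin p) (b : bIx k p) : FrobTarget k n p 1 →+ (M →+ M) :=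
  (Finsupp.liftAddHom (innerHom k p n M v b)).comp
    (AddMonoidAlgebra.coeffAddEquiv (R := k) (M := Fin n →₀ ℕ)).toAddMonoidHom

lemma tauAux_monomial (v : Fin n → Fin p) (b : bIx k p) (u : Fin n →₀ ℕ) (c : k) :
    tauAux k p n M v b (toT k n p 1 (monomial u c)) = innerHom k p n M v b u c :=
  Finsupp.liftAddHom_apply_single _ _ _

lemma toT_mul (a b : MvPolynomial (Fin n) k) :
    toT k n p 1 a * toT k n p 1 b = toT k n p 1 (a * b) := rfl

lemma toT_add (a b : MvPolynomial (Fin n) k) :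
    toT k n p 1 (a + b) = toT k n p 1 a + toT k n p 1 b := rfl

lemma smul_toT (r f : MvPolynomial (Fin n) k) :
    r • (toT k n p 1 f) = toT k n p 1 (r ^ p * f) := by
  rw [Algebra.smul_def, RingHom.algebraMap_toAlgebra]
  show toT k n p 1 ((iterateFrobenius (MvPolynomial (Fin n) k) p 1) r)
      * toT k n p 1 f = _
  rw [iterateFrobenius_one_apply, toT_mul]

lemma tauAux_balance (v : Fin n → Fin p) (b : bIx k p) :
    ∀ (r : MvPolynomial (Fin n) k) (f : FrobTarget k n p 1) (y : M),
      tauAux k p n M v b (r • f) y = tauAux k p n M v b f (r • y) := by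
  have hp1 : 1 < p := (Fact.out : p.Prime).one_lt
  have key : ∀ (r g : MvPolynomial (Fin n) k) (y : M),
      tauAux k p n M v b (toT k n p 1 (r ^ p * g)) y
        = tauAux k p n M v b (toT k n p 1 g) (r • y) := by
    intro r g y
    induction r using MvPolynomial.induction_on' with
    | add r₁ r₂ h₁ h₂ =>
      have hpow : (r₁ + r₂) ^ p = r₁ ^ p + r₂ ^ p := add_pow_char _ _ _
      rw [hpow, add_mul, toT_add, map_add, AddMonoidHom.add_apply, h₁, h₂, add_smul, map_add]
    | monomial w s =>
      induction g using MvPolynomial.induction_on' with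
      | add g₁ g₂ h₁ h₂ =>
        rw [mul_add, toT_add, toT_add, map_add, map_add, AddMonoidHom.add_apply,
          AddMonoidHom.add_apply, h₁, h₂]
      | monomial u c =>
        rw [monomial_pow, monomial_mul, tauAux_monomial, tauAux_monomial]
        by_cases hc : cnd p n v u
        · have hc' : cnd p n v (p • w + u) := by
            intro j
            have : (p • w + u) j = p * w j + u j := by
              simp [Finsupp.add_apply, Finsupp.smul_apply, mul_comm]
            rw [this, Nat.mul_add_mod]
            exact hc j
          have hdiv : divp p n (p • w + u) = w + divp p n u := by
            ext j
            simp only [divp_apply, Finsupp.add_apply, Finsupp.smul_apply, smul_eq_mul]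
            exact Nat.mul_add_div (by omega) _ _
          rw [innerHom_apply_pos k p n M b hc' _ y, innerHom_apply_pos k p n M b hc _ _,
            hdiv, kappa_pmul]
          rw [show (monomial (w + divp p n u)) (s * kappa k p b c)
              = monomial w s * monomial (divp p n u) (kappa k p b c) by
            rw [monomial_mul]]
          rw [mul_comm, mul_smul]
        · have hc' : ¬ cnd p n v (p • w + u) := by
            intro hcc
            apply hc
            intro j
            have := hcc j
            rw [show (p • w + u) j = p * w j + u j by
              simp [Finsupp.add_apply, Finsupp.smul_apply, mul_comm], Nat.mul_add_mod] at this
            exact this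
          rw [innerHom_apply_neg k p n M b hc', innerHom_apply_neg k p n M b hc]
  intro r f y
  have := key r f y
  rw [show r • f = toT k n p 1 (r ^ p * (show MvPolynomial (Fin n) k from f)) from smul_toT k p n r f]
  exact this

def tau (v : Fin n → Fin p) (b : bIx k p) : Fstar k n p 1 M →+ M :=
  TensorProduct.liftAddHom (tauAux k p n M v b) (tauAux_balance k p n M v b)

lemma tau_tmul_monomial (v : Fin n → Fin p) (b : bIx k p) (u : Fin n →₀ ℕ) (c : k) (y : M) :
    tau k p n M v b (tensorMk k n p 1 M (toT k n p 1 (monomial u c)) y)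
      = if cnd p n v u then (monomial (divp p n u) (kappa k p b c)) • y else 0 := by
  have h : tau k p n M v b (tensorMk k n p 1 M (toT k n p 1 (monomial u c)) y)
      = tauAux k p n M v b (toT k n p 1 (monomial u c)) y :=
    TensorProduct.liftAddHom_tmul _ _ _ _
  rw [h, tauAux_monomial]
  by_cases hc : cnd p n v u
  · rw [innerHom_apply_pos k p n M b hc, if_pos hc]
  · rw [innerHom_apply_neg k p n M b hc, if_neg hc]


variable (k : Type) [Field k] (p : ℕ) [Fact p.Prime] [CharP k p] (n : ℕ) in
variable (M : Type) [AddCommGroup M] [Module (MvPolynomial (Fin n) k) M] in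
lemma Fstar_induction {P : Fstar k n p 1 M → Prop} (h0 : P 0)
    (hm : ∀ (u : Fin n →₀ ℕ) (c : k) (y : M),
      P (tensorMk k n p 1 M (toT k n p 1 (monomial u c)) y))
    (hadd : ∀ z w, P z → P w → P (z + w)) : ∀ z, P z := by
  intro z
  refine TensorProduct.induction_on z h0 ?_ hadd
  intro f y
  have key : ∀ g : MvPolynomial (Fin n) k, P (tensorMk k n p 1 M (toT k n p 1 g) y) := by
    intro g
    induction g using MvPolynomial.induction_on' with
    | monomial u c => exact hm u c y
    | add g₁ g₂ hg₁ hg₂ =>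
      have : tensorMk k n p 1 M (toT k n p 1 (g₁ + g₂)) y
          = tensorMk k n p 1 M (toT k n p 1 g₁) y + tensorMk k n p 1 M (toT k n p 1 g₂) y :=
        TensorProduct.add_tmul _ _ _
      rw [this]; exact hadd _ _ hg₁ hg₂
  exact key f

variable (k : Type) [Field k] (p : ℕ) [Fact p.Prime] [CharP k p] (n : ℕ)
variable (M : Type) [AddCommGroup M] [Module (MvPolynomial (Fin n) k) M]

lemma smulF_tmul (r : MvPolynomial (Fin n) k) (f : FrobTarget k n p 1) (y : M) :
    r • (tensorMk k n p 1 M f y) = tensorMk k n p 1 M (toT k n p 1 r * f) y := by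
  show (toT k n p 1 r) • (f ⊗ₜ[MvPolynomial (Fin n) k] y) = _
  rw [TensorProduct.smul_tmul']
  rfl

lemma X_smul_tmul_monomial (j : Fin n) (u : Fin n →₀ ℕ) (c : k) (y : M) :
    (X j : MvPolynomial (Fin n) k) • (tensorMk k n p 1 M (toT k n p 1 (monomial u c)) y)
      = tensorMk k n p 1 M (toT k n p 1 (monomial (u + Finsupp.single j 1) c)) y := by
  rw [smulF_tmul, toT_mul]
  congr 1
  rw [show (X j : MvPolynomial (Fin n) k) = monomial (Finsupp.single j 1) 1 from rfl,
    monomial_mul, one_mul, add_comm]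

/-- Relation A: shifting `tau` along multiplication by `X j`, nonzero index case. -/
lemma tau_X_smul (v : Fin n → Fin p) (b : bIx k p) (j : Fin n) (h : (v j : ℕ) ≠ 0)
    (z : Fstar k n p 1 M) :
    tau k p n M v b ((X j : MvPolynomial (Fin n) k) • z)
      = tau k p n M (Function.update v j
          ⟨(v j : ℕ) - 1, lt_of_le_of_lt (Nat.sub_le _ _) (v j).isLt⟩) b z := by
  have hp1 : 1 < p := (Fact.out : p.Prime).one_lt
  set v' := Function.update v j
      ⟨(v j : ℕ) - 1, lt_of_le_of_lt (Nat.sub_le _ _) (v j).isLt⟩ with hv'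
  induction z using Fstar_induction with
  | h0 => rw [smul_zero, map_zero, map_zero]
  | hadd z w hz hw => rw [smul_add, map_add, map_add, hz, hw]
  | hm u c y =>
    rw [X_smul_tmul_monomial, tau_tmul_monomial, tau_tmul_monomial]
    have hcnd : cnd p n v (u + Finsupp.single j 1) ↔ cnd p n v' u := by
      constructor
      · intro hc j'
        rcases eq_or_ne j' j with rfl | hne
        · have := hc j'
          rw [Finsupp.add_apply, Finsupp.single_eq_same,
            mod_succ_iff₁ hp1 (Nat.one_le_iff_ne_zero.2 h) (v j').isLt] at this
          rw [this, hv', Function.update_self]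
        · have := hc j'
          rwa [Finsupp.add_apply, Finsupp.single_eq_of_ne' (Ne.symm hne), add_zero,
            ← Function.update_of_ne hne _ v, ← hv'] at this
      · intro hc j'
        rcases eq_or_ne j' j with rfl | hne
        · rw [Finsupp.add_apply, Finsupp.single_eq_same,
            mod_succ_iff₁ hp1 (Nat.one_le_iff_ne_zero.2 h) (v j').isLt]
          have := hc j'
          rwa [hv', Function.update_self] at this
        · rw [Finsupp.add_apply, Finsupp.single_eq_of_ne' (Ne.symm hne), add_zero]
          have := hc j'
          rwa [hv', Function.update_of_ne hne _ v] at this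
    by_cases hc : cnd p n v' u
    · rw [if_pos (hcnd.2 hc), if_pos hc]
      have hdiv : divp p n (u + Finsupp.single j 1) = divp p n u := by
        ext j'
        rcases eq_or_ne j' j with rfl | hne
        · rw [divp_apply, divp_apply, Finsupp.add_apply, Finsupp.single_eq_same]
          apply div_succ_ne hp1
          have h2 := hc j'
          rw [hv', Function.update_self] at h2
          have h4 : u j' % p = (v j' : ℕ) - 1 := h2
          have h3 : (v j' : ℕ) < p := (v j').isLt
          omega
        · rw [divp_apply, divp_apply, Finsupp.add_apply,
            Finsupp.single_eq_of_ne' (Ne.symm hne), add_zero]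
      rw [hdiv]
    · rw [if_neg (fun hcc => hc (hcnd.1 hcc)), if_neg hc]

/-- Relation B: the index-zero case, producing an `X j` action on `M`. -/
lemma tau_X_smul_zero (v : Fin n → Fin p) (b : bIx k p) (j : Fin n) (h : (v j : ℕ) = 0)
    (z : Fstar k n p 1 M) :
    tau k p n M v b ((X j : MvPolynomial (Fin n) k) • z)
      = (X j : MvPolynomial (Fin n) k) •
        tau k p n M (Function.update v j ⟨p - 1, by omega⟩) b z := by
  have hp1 : 1 < p := (Fact.out : p.Prime).one_lt
  set v' := Function.update v j (⟨p - 1, by omega⟩ : Fin p) with hv'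
  induction z using Fstar_induction with
  | h0 => rw [smul_zero, map_zero, map_zero, smul_zero]
  | hadd z w hz hw => rw [smul_add, map_add, map_add, smul_add, hz, hw]
  | hm u c y =>
    rw [X_smul_tmul_monomial, tau_tmul_monomial, tau_tmul_monomial]
    have hcnd : cnd p n v (u + Finsupp.single j 1) ↔ cnd p n v' u := by
      constructor
      · intro hc j'
        rcases eq_or_ne j' j with rfl | hne
        · have := hc j'
          rw [Finsupp.add_apply, Finsupp.single_eq_same, h, mod_succ_iff₀ hp1] at this
          rw [this, hv', Function.update_self]
        · have := hc j'
          rwa [Finsupp.add_apply, Finsupp.single_eq_of_ne' (Ne.symm hne), add_zero,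
            ← Function.update_of_ne hne _ v, ← hv'] at this
      · intro hc j'
        rcases eq_or_ne j' j with rfl | hne
        · rw [Finsupp.add_apply, Finsupp.single_eq_same, h, mod_succ_iff₀ hp1]
          have := hc j'
          rwa [hv', Function.update_self] at this
        · rw [Finsupp.add_apply, Finsupp.single_eq_of_ne' (Ne.symm hne), add_zero]
          have := hc j'
          rwa [hv', Function.update_of_ne hne _ v] at this
    by_cases hc : cnd p n v' u
    · rw [if_pos (hcnd.2 hc), if_pos hc]
      have hdiv : divp p n (u + Finsupp.single j 1) = divp p n u + Finsupp.single j 1 := by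
        ext j'
        rcases eq_or_ne j' j with rfl | hne
        · rw [divp_apply, Finsupp.add_apply, Finsupp.add_apply, Finsupp.single_eq_same,
            divp_apply]
          apply div_succ_eq hp1
          have := hc j'
          rwa [hv', Function.update_self] at this
        · rw [divp_apply, Finsupp.add_apply, Finsupp.add_apply,
            Finsupp.single_eq_of_ne' (Ne.symm hne), add_zero, add_zero, divp_apply]
      rw [hdiv]
      rw [show (monomial (divp p n u + Finsupp.single j 1)) (kappa k p b c)
          = X j * monomial (divp p n u) (kappa k p b c) by
        rw [show (X j : MvPolynomial (Fin n) k) = monomial (Finsupp.single j 1) 1 from rfl,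
          monomial_mul, one_mul, add_comm]]
      rw [mul_smul]
    · rw [if_neg (fun hcc => hc (hcnd.1 hcc)), if_neg hc, smul_zero]

lemma tau_tmul (v : Fin n → Fin p) (b : bIx k p) (f : MvPolynomial (Fin n) k) (y : M) :
    tau k p n M v b (tensorMk k n p 1 M (toT k n p 1 f) y)
      = ∑ u ∈ f.support, (if cnd p n v u
          then (monomial (divp p n u) (kappa k p b (coeff u f))) • y else 0) := by
  conv_lhs => rw [← support_sum_monomial_coeff f]
  have hsum : tensorMk k n p 1 M (toT k n p 1 (∑ u ∈ f.support, monomial u (coeff u f))) y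
      = ∑ u ∈ f.support, tensorMk k n p 1 M (toT k n p 1 (monomial u (coeff u f))) y :=
    TensorProduct.sum_tmul f.support (fun u => toT k n p 1 (monomial u (coeff u f))) y
  rw [hsum, map_sum]
  exact Finset.sum_congr rfl fun u _ => tau_tmul_monomial k p n M v b u (coeff u f) y

lemma degree_eq_sum (u : Fin n →₀ ℕ) : (Finsupp.weight 1) u = ∑ j, u j := by
  rw [show (Finsupp.weight 1 : (Fin n →₀ ℕ) →+ ℕ) = Finsupp.weight (fun _ => 1) from rfl,
    ← Finsupp.degree_eq_weight_one, Finsupp.degree]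
  exact Finset.sum_subset (Finset.subset_univ _)
    (fun j _ hj => Finsupp.notMem_support_iff.1 hj)

variable {k p n M} in
lemma tau_grade (𝓜 : ℤ → AddSubgroup M)
    (hMsmul : ∀ (a : ℕ) (b : ℤ) (r : MvPolynomial (Fin n) k) (x : M),
      r ∈ homogeneousSubmodule (Fin n) k a → x ∈ 𝓜 b → r • x ∈ 𝓜 ((a : ℤ) + b))
    (d : ℤ) (v : Fin n → Fin p) (b : bIx k p) (e : ℤ)
    (he : (p : ℤ) * e + (∑ j, ((v j : ℕ) : ℤ)) = d)
    (z : Fstar k n p 1 M) (hz : z ∈ FstarGrade k n p 1 M 𝓜 d) :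
    tau k p n M v b z ∈ 𝓜 e := by
  revert z
  have hle : FstarGrade k n p 1 M 𝓜 d
      ≤ AddSubgroup.comap (tau k p n M v b) (𝓜 e) := by
    apply (AddSubgroup.closure_le _).2
    rintro z ⟨a, c, r, y, hr, hy, hsum, rfl⟩
    show tau k p n M v b (tensorMk k n p 1 M (toT k n p 1 r) y) ∈ 𝓜 e
    rw [tau_tmul]
    apply sum_mem
    intro u hu
    split_ifs with hcnd
    · -- degree bookkeeping
      have hdeg : ∑ j, (u j : ℕ) = a := by
        have := hr (Finsupp.mem_support_iff.1 hu)
        rw [show ((Finsupp.weight 1) u : ℕ) = ∑ j, u j from degree_eq_sum n u] at this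
        exact this
      have hsplit : ∀ j, u j = p * (divp p n u j) + (v j : ℕ) := by
        intro j
        rw [divp_apply, ← hcnd j]
        exact (Nat.div_add_mod (u j) p).symm
      have hdeg2 : (a : ℤ) = p * (∑ j, (divp p n u j : ℤ)) + ∑ j, ((v j : ℕ) : ℤ) := by
        have : (∑ j, (u j : ℤ)) = ∑ j, ((p : ℤ) * (divp p n u j : ℤ) + ((v j : ℕ) : ℤ)) := by
          apply Finset.sum_congr rfl
          intro j _
          exact_mod_cast congrArg (Nat.cast : ℕ → ℤ) (hsplit j)
        rw [← hdeg]
        push_cast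
        rw [this, Finset.sum_add_distrib, Finset.mul_sum]
      have hdegm : (monomial (divp p n u)) (kappa k p b (coeff u r))
          ∈ homogeneousSubmodule (Fin n) k (∑ j, divp p n u j) := by
        rw [mem_homogeneousSubmodule]
        apply isHomogeneous_monomial
        rw [Finsupp.degree]
        exact Finset.sum_subset (Finset.subset_univ _)
          (fun j _ hj => Finsupp.notMem_support_iff.1 hj)
      have := hMsmul _ c _ y hdegm hy
      have heq : ((∑ j, divp p n u j : ℕ) : ℤ) + c = e := by
        have hpne : (p : ℤ) ≠ 0 := by
          have : 0 < p := (Fact.out : p.Prime).pos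
          exact_mod_cast this.ne'
        have hc : (a : ℤ) + p * c = d := by
          have : ((p : ℤ) ^ 1) = (p : ℤ) := pow_one _
          rw [← hsum, this]
        -- from he, hdeg2, hc : p e + sv = a + p c = p * sumdiv + sv + p c
        have : (p : ℤ) * e = (p : ℤ) * ((∑ j, (divp p n u j : ℤ)) + c) := by
          push_cast at hdeg2 hc he ⊢
          linarith
        have := mul_left_cancel₀ hpne this
        push_cast
        push_cast at this
        linarith
      rw [← heq]
      exact this
    · exact zero_mem _
  intro z hz
  exact hle hz

variable {k p n M} in
lemma tau_grade_zero (𝓜 : ℤ → AddSubgroup M)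
    (d : ℤ) (v : Fin n → Fin p) (b : bIx k p)
    (hnd : ¬ ((p : ℤ) ∣ (d - ∑ j, ((v j : ℕ) : ℤ))))
    (z : Fstar k n p 1 M) (hz : z ∈ FstarGrade k n p 1 M 𝓜 d) :
    tau k p n M v b z = 0 := by
  have hle : FstarGrade k n p 1 M 𝓜 d
      ≤ AddSubgroup.comap (tau k p n M v b) ⊥ := by
    apply (AddSubgroup.closure_le _).2
    rintro z ⟨a, c, r, y, hr, hy, hsum, rfl⟩
    show tau k p n M v b (tensorMk k n p 1 M (toT k n p 1 r) y) ∈ (⊥ : AddSubgroup M)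
    rw [AddSubgroup.mem_bot, tau_tmul]
    apply Finset.sum_eq_zero
    intro u hu
    split_ifs with hcnd
    · exfalso
      apply hnd
      have hdeg : ∑ j, (u j : ℕ) = a := by
        have := hr (Finsupp.mem_support_iff.1 hu)
        rw [show ((Finsupp.weight 1) u : ℕ) = ∑ j, u j from degree_eq_sum n u] at this
        exact this
      have hsplit : ∀ j, u j = p * (divp p n u j) + (v j : ℕ) := by
        intro j
        rw [divp_apply, ← hcnd j]
        exact (Nat.div_add_mod (u j) p).symm
      have hdeg2 : (a : ℤ) = p * (∑ j, (divp p n u j : ℤ)) + ∑ j, ((v j : ℕ) : ℤ) := by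
        have h5 : (∑ j, (u j : ℤ)) = ∑ j, ((p : ℤ) * (divp p n u j : ℤ) + ((v j : ℕ) : ℤ)) := by
          apply Finset.sum_congr rfl
          intro j _
          exact_mod_cast congrArg (Nat.cast : ℕ → ℤ) (hsplit j)
        rw [← hdeg]
        push_cast
        rw [h5, Finset.sum_add_distrib, Finset.mul_sum]
      have hc : (a : ℤ) + p * c = d := by
        have h6 : ((p : ℤ) ^ 1) = (p : ℤ) := pow_one _
        rw [← hsum, h6]
      refine ⟨(∑ j, (divp p n u j : ℤ)) + c, by linarith⟩
    · rfl
  have := hle hz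
  rwa [AddSubgroup.mem_comap, AddSubgroup.mem_bot] at this

/-- The `b`-coefficient finsupp of `c` w.r.t. the `p⁻¹`-twisted basis. -/
def kap' (c : k) : bIx k p →₀ k := (bas k p).repr (show kT k p from c)

lemma kap'_apply (c : k) (b : bIx k p) : kap' k p c b = kappa k p b c := rfl

lemma kap'_pmul (s c : k) : kap' k p (s ^ p * c) = s • kap' k p c := by
  rw [kap', show (show kT k p from s ^ p * c) = s • (show kT k p from c) from rfl, map_smul]
  rfl

lemma kap'_add (c₁ c₂ : k) : kap' k p (c₁ + c₂) = kap' k p c₁ + kap' k p c₂ := by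
  rw [kap', show (show kT k p from c₁ + c₂)
    = (show kT k p from c₁) + (show kT k p from c₂) from rfl, map_add]
  rfl

lemma kap'_zero : kap' k p 0 = 0 := by
  rw [kap', show (show kT k p from (0 : k)) = (0 : kT k p) from rfl, map_zero]

def vF (v : Fin n → Fin p) : Fin n →₀ ℕ :=
  Finsupp.equivFunOnFinite.symm (fun j => (v j : ℕ))

lemma vF_apply (v : Fin n → Fin p) (j : Fin n) : vF p n v j = (v j : ℕ) := rfl

/-- The basis monomial `b ⋅ x^v`. -/
def bmon (v : Fin n → Fin p) (b : bIx k p) : MvPolynomial (Fin n) k :=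
  monomial (vF p n v) (basK k p b)

def reconInner (v : Fin n → Fin p) (u : Fin n →₀ ℕ) : k →+ (M →+ Fstar k n p 1 M) :=
  if cnd p n v u then
    { toFun := fun c =>
      { toFun := fun y => (kap' k p c).sum
          (fun b s => (toT k n p 1 (bmon k p n v b)) ⊗ₜ[MvPolynomial (Fin n) k]
            ((monomial (divp p n u) s : MvPolynomial (Fin n) k) • y))
        map_zero' := by
          simp only [smul_zero, TensorProduct.tmul_zero]
          exact Finset.sum_const_zero
        map_add' := by
          intro y z
          refine Eq.trans ?_ Finsupp.sum_add
          apply Finsupp.sum_congr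
          intro b _
          rw [smul_add, TensorProduct.tmul_add]; rfl }
      map_zero' := by
        ext y
        simp only [AddMonoidHom.coe_mk, ZeroHom.coe_mk, AddMonoidHom.zero_apply,
          kap'_zero k p, Finsupp.sum_zero_index]
        exact Finsupp.sum_zero_index
      map_add' := by
        intro c₁ c₂
        ext y
        simp only [AddMonoidHom.coe_mk, ZeroHom.coe_mk, AddMonoidHom.add_apply, kap'_add k p]
        exact Finsupp.sum_add_index'
          (fun b => by rw [monomial_zero, zero_smul, TensorProduct.tmul_zero]; rfl)
          (fun b s₁ s₂ => by rw [map_add, add_smul, TensorProduct.tmul_add]; rfl) }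
  else 0

lemma reconInner_apply_pos {v : Fin n → Fin p} {u : Fin n →₀ ℕ} (h : cnd p n v u)
    (c : k) (y : M) :
    reconInner k p n M v u c y = (kap' k p c).sum
      (fun b s => (toT k n p 1 (bmon k p n v b)) ⊗ₜ[MvPolynomial (Fin n) k]
        ((monomial (divp p n u) s : MvPolynomial (Fin n) k) • y)) := by
  rw [reconInner, if_pos h]; rfl

lemma reconInner_apply_neg {v : Fin n → Fin p} {u : Fin n →₀ ℕ} (h : ¬ cnd p n v u)
    (c : k) (y : M) : reconInner k p n M v u c y = 0 := by
  rw [reconInner, if_neg h]; rfl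

def reconAux (v : Fin n → Fin p) : FrobTarget k n p 1 →+ (M →+ Fstar k n p 1 M) :=
  (Finsupp.liftAddHom (reconInner k p n M v)).comp
    (AddMonoidAlgebra.coeffAddEquiv (R := k) (M := Fin n →₀ ℕ)).toAddMonoidHom

lemma reconAux_monomial (v : Fin n → Fin p) (u : Fin n →₀ ℕ) (c : k) :
    reconAux k p n M v (toT k n p 1 (monomial u c)) = reconInner k p n M v u c :=
  Finsupp.liftAddHom_apply_single _ _ _

lemma reconAux_balance (v : Fin n → Fin p) :
    ∀ (r : MvPolynomial (Fin n) k) (f : FrobTarget k n p 1) (y : M),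
      reconAux k p n M v (r • f) y = reconAux k p n M v f (r • y) := by
  have key : ∀ (r g : MvPolynomial (Fin n) k) (y : M),
      reconAux k p n M v (toT k n p 1 (r ^ p * g)) y
        = reconAux k p n M v (toT k n p 1 g) (r • y) := by
    intro r g y
    induction r using MvPolynomial.induction_on' with
    | add r₁ r₂ h₁ h₂ =>
      have hpow : (r₁ + r₂) ^ p = r₁ ^ p + r₂ ^ p := add_pow_char _ _ _
      rw [hpow, add_mul, toT_add, map_add, AddMonoidHom.add_apply, h₁, h₂, add_smul, map_add]
    | monomial w s =>
      induction g using MvPolynomial.induction_on' with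
      | add g₁ g₂ h₁ h₂ =>
        rw [mul_add, toT_add, toT_add, map_add, map_add, AddMonoidHom.add_apply,
          AddMonoidHom.add_apply, h₁, h₂]
      | monomial u c =>
        rw [monomial_pow, monomial_mul, reconAux_monomial, reconAux_monomial]
        by_cases hc : cnd p n v u
        · have hc' : cnd p n v (p • w + u) := by
            intro j
            rw [show (p • w + u) j = p * w j + u j by
              simp [Finsupp.add_apply, Finsupp.smul_apply, mul_comm], Nat.mul_add_mod]
            exact hc j
          have hdiv : divp p n (p • w + u) = w + divp p n u := by
            ext j
            simp only [divp_apply, Finsupp.add_apply, Finsupp.smul_apply, smul_eq_mul]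
            exact Nat.mul_add_div (by
              have : 0 < p := (Fact.out : p.Prime).pos
              omega) _ _
          rw [reconInner_apply_pos k p n M hc' _ y, reconInner_apply_pos k p n M hc _ _,
            hdiv, kap'_pmul]
          rw [Finsupp.sum_smul_index
            (fun b => by rw [monomial_zero, zero_smul, TensorProduct.tmul_zero])]
          apply Finsupp.sum_congr
          intro b _
          rw [show (monomial (w + divp p n u)) (s * (kap' k p c) b)
              = monomial w s * monomial (divp p n u) ((kap' k p c) b) by rw [monomial_mul],
            mul_comm, mul_smul]
        · have hc' : ¬ cnd p n v (p • w + u) := by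
            intro hcc
            apply hc
            intro j
            have := hcc j
            rwa [show (p • w + u) j = p * w j + u j by
              simp [Finsupp.add_apply, Finsupp.smul_apply, mul_comm], Nat.mul_add_mod] at this
          rw [reconInner_apply_neg k p n M hc', reconInner_apply_neg k p n M hc]
  intro r f y
  have := key r f y
  rw [show r • f = toT k n p 1 (r ^ p * (show MvPolynomial (Fin n) k from f)) from smul_toT k p n r f]
  exact this

def recon (v : Fin n → Fin p) : Fstar k n p 1 M →+ Fstar k n p 1 M :=
  TensorProduct.liftAddHom (reconAux k p n M v) (reconAux_balance k p n M v)

lemma recon_tmul_monomial (v : Fin n → Fin p) (u : Fin n →₀ ℕ) (c : k) (y : M) :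
    recon k p n M v (tensorMk k n p 1 M (toT k n p 1 (monomial u c)) y)
      = reconInner k p n M v u c y := by
  have h : recon k p n M v (tensorMk k n p 1 M (toT k n p 1 (monomial u c)) y)
      = reconAux k p n M v (toT k n p 1 (monomial u c)) y :=
    TensorProduct.liftAddHom_tmul _ _ _ _
  rw [h, reconAux_monomial]

lemma tmul_smul_toT (r f : MvPolynomial (Fin n) k) (y : M) :
    (toT k n p 1 f) ⊗ₜ[MvPolynomial (Fin n) k] (r • y)
      = (toT k n p 1 (r ^ p * f)) ⊗ₜ[MvPolynomial (Fin n) k] y := by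
  rw [← TensorProduct.smul_tmul, smul_toT]

/-- Reconstruction: the sum of all `recon v` is the identity. -/
lemma sum_recon (z : Fstar k n p 1 M) :
    ∑ v : Fin n → Fin p, recon k p n M v z = z := by
  have hp0 : 0 < p := (Fact.out : p.Prime).pos
  induction z using Fstar_induction with
  | h0 => simp [map_zero]
  | hadd z w hz hw =>
    simp only [map_add]
    rw [Finset.sum_add_distrib, hz, hw]
  | hm u c y =>
    set v₀ : Fin n → Fin p := fun j => (⟨u j % p, Nat.mod_lt _ hp0⟩ : Fin p) with hv₀
    have hcnd : ∀ v : Fin n → Fin p, cnd p n v u ↔ v = v₀ := by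
      intro v
      constructor
      · intro hc
        funext j
        exact Fin.ext ((hc j).symm)
      · rintro rfl
        intro j
        rfl
    have hval : ∀ v : Fin n → Fin p, recon k p n M v
        (tensorMk k n p 1 M (toT k n p 1 (monomial u c)) y)
        = if v = v₀ then reconInner k p n M v₀ u c y else 0 := by
      intro v
      rw [recon_tmul_monomial]
      by_cases hv : v = v₀
      · rw [if_pos hv, hv]
      · rw [if_neg hv, reconInner_apply_neg k p n M (fun hc => hv ((hcnd v).1 hc))]
    have hsum : ∑ v : Fin n → Fin p, recon k p n M v
        (tensorMk k n p 1 M (toT k n p 1 (monomial u c)) y)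
        = reconInner k p n M v₀ u c y := by
      rw [Finset.sum_congr rfl (fun v _ => hval v)]
      exact Finset.sum_ite_eq' _ _ _ |>.trans (if_pos (Finset.mem_univ _))
    rw [hsum, reconInner_apply_pos k p n M ((hcnd v₀).2 rfl)]
    -- now compute the Finsupp.sum
    have hidx : p • divp p n u + vF p n v₀ = u := by
      ext j
      simp only [Finsupp.add_apply, Finsupp.smul_apply, smul_eq_mul, divp_apply, vF_apply]
      exact Nat.div_add_mod (u j) p
    have hterm : ∀ b : bIx k p, ∀ s : k,
        (toT k n p 1 (bmon k p n v₀ b)) ⊗ₜ[MvPolynomial (Fin n) k]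
          ((monomial (divp p n u) s : MvPolynomial (Fin n) k) • y)
        = (toT k n p 1 (monomial u (s ^ p * basK k p b)))
            ⊗ₜ[MvPolynomial (Fin n) k] y := by
      intro b s
      rw [tmul_smul_toT, monomial_pow, bmon, monomial_mul, hidx]
    have hstep : ((kap' k p c).sum fun b s => (toT k n p 1 (bmon k p n v₀ b))
          ⊗ₜ[MvPolynomial (Fin n) k] ((monomial (divp p n u) s : MvPolynomial (Fin n) k) • y))
        = ((kap' k p c).sum fun b s => (toT k n p 1 (monomial u (s ^ p * basK k p b)))
          ⊗ₜ[MvPolynomial (Fin n) k] y) :=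
      Finsupp.sum_congr (fun b _ => hterm b (kap' k p c b))
    rw [hstep]
    -- pull the sum inside
    have hhom : ∀ (g : bIx k p → k → k),
        ((kap' k p c).sum fun b s => (toT k n p 1 (monomial u (g b s)))
          ⊗ₜ[MvPolynomial (Fin n) k] y)
        = (toT k n p 1 (monomial u ((kap' k p c).sum g))) ⊗ₜ[MvPolynomial (Fin n) k] y := by
      intro g
      let h : k →+ Fstar k n p 1 M := AddMonoidHom.mk'
        (fun a => (toT k n p 1 (monomial u a)) ⊗ₜ[MvPolynomial (Fin n) k] y)
        (by
          intro a₁ a₂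
          rw [show (monomial u (a₁ + a₂) : MvPolynomial (Fin n) k)
              = monomial u a₁ + monomial u a₂ from (monomial u).map_add a₁ a₂,
            toT_add, TensorProduct.add_tmul]; rfl)
      exact (map_finsuppSum h (kap' k p c) g).symm
    rw [hhom]
    rw [show ((kap' k p c).sum fun b s => s ^ p * basK k p b) = c
      from sum_kappa k p c]
    rfl

/-- `recon v z` is a finite sum of `bmon ⊗ tau` terms. -/
lemma recon_eq_sum (v : Fin n → Fin p) (z : Fstar k n p 1 M) :
    ∃ s : Finset (bIx k p), ∀ t : Finset (bIx k p), s ⊆ t →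
      recon k p n M v z = ∑ b ∈ t,
        (toT k n p 1 (bmon k p n v b)) ⊗ₜ[MvPolynomial (Fin n) k] (tau k p n M v b z) := by
  induction z using Fstar_induction with
  | h0 =>
    refine ⟨∅, fun t _ => ?_⟩
    simp only [map_zero, TensorProduct.tmul_zero, Finset.sum_const_zero]
    rfl
  | hadd z w hz hw =>
    haveI := Classical.decEq (bIx k p)
    obtain ⟨s₁, hs₁⟩ := hz
    obtain ⟨s₂, hs₂⟩ := hw
    refine ⟨s₁ ∪ s₂, fun t ht => ?_⟩
    rw [map_add, hs₁ t (Finset.union_subset_iff.1 ht).1, hs₂ t (Finset.union_subset_iff.1 ht).2]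
    refine Eq.trans Finset.sum_add_distrib.symm ?_
    apply Finset.sum_congr rfl
    intro b _
    rw [map_add, TensorProduct.tmul_add]
    rfl
  | hm u c y =>
    refine ⟨(kap' k p c).support, fun t ht => ?_⟩
    rw [recon_tmul_monomial]
    by_cases hc : cnd p n v u
    · rw [reconInner_apply_pos k p n M hc]
      have hterm : ∀ b ∈ t, (toT k n p 1 (bmon k p n v b)) ⊗ₜ[MvPolynomial (Fin n) k]
          (tau k p n M v b (tensorMk k n p 1 M (toT k n p 1 (monomial u c)) y))
          = (toT k n p 1 (bmon k p n v b)) ⊗ₜ[MvPolynomial (Fin n) k]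
            ((monomial (divp p n u) (kap' k p c b) : MvPolynomial (Fin n) k) • y) := by
        intro b _
        rw [tau_tmul_monomial, if_pos hc]
        rfl
      rw [Finset.sum_congr rfl hterm]
      rw [Finsupp.sum]
      refine Finset.sum_subset ht ?_
      intro b _ hb
      rw [Finsupp.notMem_support_iff.1 hb, monomial_zero, zero_smul,
        TensorProduct.tmul_zero]
      rfl
    · rw [reconInner_apply_neg k p n M hc]
      symm
      apply Finset.sum_eq_zero
      intro b _
      rw [tau_tmul_monomial, if_neg hc, TensorProduct.tmul_zero]
      rfl

/-- Faithfulness: if all coefficient functionals vanish, the element is zero. -/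
lemma eq_zero_of_tau_eq_zero (z : Fstar k n p 1 M)
    (h : ∀ (v : Fin n → Fin p) (b : bIx k p), tau k p n M v b z = 0) : z = 0 := by
  rw [← sum_recon k p n M z]
  apply Finset.sum_eq_zero
  intro v _
  obtain ⟨s, hs⟩ := recon_eq_sum k p n M v z
  rw [hs s (subset_refl s)]
  apply Finset.sum_eq_zero
  intro b _
  rw [h v b, TensorProduct.tmul_zero]
  rfl
end S5


/-- Let `k` be a field of characteristic `p > 0`, `R = k[x₁,…,xₙ]`
graded by total degree, and `m = (x₁,…,xₙ)`.  Let `M` be a `ℤ`-graded `R`-module with a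
degree-preserving `R`-linear isomorphism `θ : M → F^{*1}(M)` (a graded `F`-module).
Then every homogeneous `x ∈ M_i` with `m·x = 0` and `i ≠ −n` is zero; i.e. the socle
of `M` is concentrated in degree `−n`. -/
theorem statement5 (k : Type) [Field k] (p : ℕ) [Fact p.Prime] [CharP k p] (n : ℕ)
    (M : Type) [AddCommGroup M] [Module (MvPolynomial (Fin n) k) M]
    (𝓜 : ℤ → AddSubgroup M)
    (hMdec : DirectSum.IsInternal 𝓜)
    (hMsmul : ∀ (a : ℕ) (b : ℤ) (r : MvPolynomial (Fin n) k) (x : M),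
      r ∈ homogeneousSubmodule (Fin n) k a → x ∈ 𝓜 b → r • x ∈ 𝓜 ((a : ℤ) + b))
    (θ : M ≃ₗ[MvPolynomial (Fin n) k] Fstar k n p 1 M)
    (hθ : ∀ (d : ℤ) (x : M), x ∈ 𝓜 d → θ x ∈ FstarGrade k n p 1 M 𝓜 d)
    (i : ℤ) (hi : i ≠ -(n : ℤ)) (x : M) (hx : x ∈ 𝓜 i)
    (hsoc : ∀ r ∈ Ideal.span (Set.range (X : Fin n → MvPolynomial (Fin n) k)), r • x = 0) :
    x = 0 := by
  have hp1 : 1 < p := (Fact.out : p.Prime).one_lt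
  have main : ∀ N : ℕ, ∀ i : ℤ, (i + n).natAbs = N → i ≠ -(n : ℤ) →
      ∀ x : M, x ∈ 𝓜 i →
        (∀ j : Fin n, (X j : MvPolynomial (Fin n) k) • x = 0) → x = 0 := by
    intro N
    induction N using Nat.strong_induction_on with
    | _ N IH =>
      intro i hiN hi x hx hXx
      set z := θ x with hz
      have hXz : ∀ j : Fin n, (X j : MvPolynomial (Fin n) k) • z = 0 := by
        intro j
        rw [hz, ← map_smul, hXx j, map_zero]
      set vtop : Fin n → Fin p := fun _ => (⟨p - 1, by omega⟩ : Fin p) with hvtop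
      -- Step 1: all coefficients away from the top index vanish.
      have step1 : ∀ v : Fin n → Fin p, v ≠ vtop → ∀ b : S5.bIx k p,
          S5.tau k p n M v b z = 0 := by
        intro v hv b
        have hex : ∃ j, (v j : ℕ) ≠ p - 1 := by
          by_contra hcc
          push_neg at hcc
          exact hv (funext fun j => Fin.ext (by rw [hcc j, hvtop]))
        obtain ⟨j, hj⟩ := hex
        have hjlt : (v j : ℕ) < p := (v j).isLt
        have h1 : (v j : ℕ) + 1 < p := by omega
        set v' : Fin n → Fin p := Function.update v j (⟨(v j : ℕ) + 1, h1⟩ : Fin p) with hv'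
        have h2 : (v' j : ℕ) ≠ 0 := by
          rw [hv', Function.update_self]
          show (v j : ℕ) + 1 ≠ 0
          omega
        have hrel := S5.tau_X_smul k p n M v' b j h2 z
        rw [hXz j, map_zero] at hrel
        have h3 : Function.update v' j
            (⟨(v' j : ℕ) - 1, lt_of_le_of_lt (Nat.sub_le _ _) (v' j).isLt⟩ : Fin p) = v := by
          funext j'
          rcases eq_or_ne j' j with rfl | hne
          · rw [Function.update_self]
            apply Fin.ext
            show (v' j' : ℕ) - 1 = (v j' : ℕ)
            rw [hv', Function.update_self]
            show (v j' : ℕ) + 1 - 1 = (v j' : ℕ)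
            omega
          · rw [Function.update_of_ne hne, hv', Function.update_of_ne hne]
        rw [h3] at hrel
        exact hrel.symm
      -- Step 2: `X j` kills the top coefficient.
      have step2 : ∀ (j : Fin n) (b : S5.bIx k p),
          (X j : MvPolynomial (Fin n) k) • S5.tau k p n M vtop b z = 0 := by
        intro j b
        set v0 : Fin n → Fin p := Function.update vtop j (⟨0, by omega⟩ : Fin p) with hv0
        have h0 : (v0 j : ℕ) = 0 := by rw [hv0, Function.update_self]
        have hrel := S5.tau_X_smul_zero k p n M v0 b j h0 z
        rw [hXz j, map_zero] at hrel
        have h3 : Function.update v0 j (⟨p - 1, by omega⟩ : Fin p) = vtop := by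
          funext j'
          rcases eq_or_ne j' j with rfl | hne
          · rw [Function.update_self, hvtop]
          · rw [Function.update_of_ne hne, hv0, Function.update_of_ne hne]
        rw [h3] at hrel
        exact hrel.symm
      have hzg : z ∈ FstarGrade k n p 1 M 𝓜 i := hθ i x hx
      have hsv : (∑ j : Fin n, ((vtop j : ℕ) : ℤ)) = (n : ℤ) * ((p : ℤ) - 1) := by
        have hc : ∀ j : Fin n, ((vtop j : ℕ) : ℤ) = (p : ℤ) - 1 := by
          intro j
          rw [hvtop]
          show (((p - 1 : ℕ) : ℤ)) = (p : ℤ) - 1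
          omega
        rw [Finset.sum_congr rfl (fun j _ => hc j), Finset.sum_const, Finset.card_univ,
          Fintype.card_fin, nsmul_eq_mul]
      have hx0 : z = 0 := by
        by_cases hdvd : (p : ℤ) ∣ (i - (n : ℤ) * ((p : ℤ) - 1))
        · obtain ⟨e, he⟩ := hdvd
          have hmem : ∀ b : S5.bIx k p, S5.tau k p n M vtop b z ∈ 𝓜 e := by
            intro b
            exact S5.tau_grade 𝓜 hMsmul i vtop b e (by rw [hsv]; linarith) z hzg
          have hePn : (p : ℤ) * (e + n) = i + n := by push_cast; linarith
          have heNe : e ≠ -(n : ℤ) := by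
            intro hE
            apply hi
            rw [hE] at hePn
            have : (0 : ℤ) = i + n := by linarith
            linarith
          have hlt : (e + n).natAbs < N := by
            have h4 : (i + n : ℤ) ≠ 0 := fun h => hi (by linarith)
            have h5 : (e + n : ℤ) ≠ 0 := by
              intro h
              rw [h, mul_zero] at hePn
              exact h4 hePn.symm
            have h6 := congrArg Int.natAbs hePn
            rw [Int.natAbs_mul, Int.natAbs_natCast, hiN] at h6
            have h7 : 0 < (e + n).natAbs := Int.natAbs_pos.2 h5
            calc (e + n).natAbs < p * (e + n).natAbs := by
                  exact (Nat.lt_mul_iff_one_lt_left h7).2 hp1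
              _ = N := h6
          have hy0 : ∀ b : S5.bIx k p, S5.tau k p n M vtop b z = 0 := by
            intro b
            exact IH _ hlt e rfl heNe _ (hmem b) (fun j => step2 j b)
          apply S5.eq_zero_of_tau_eq_zero k p n M z
          intro v b
          by_cases hvv : v = vtop
          · rw [hvv]; exact hy0 b
          · exact step1 v hvv b
        · have hy0 : ∀ b : S5.bIx k p, S5.tau k p n M vtop b z = 0 := by
            intro b
            apply S5.tau_grade_zero 𝓜 i vtop b _ z hzg
            rw [hsv]
            exact hdvd
          apply S5.eq_zero_of_tau_eq_zero k p n M z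
          intro v b
          by_cases hvv : v = vtop
          · rw [hvv]; exact hy0 b
          · exact step1 v hvv b
      rw [hz] at hx0
      exact (LinearEquiv.map_eq_zero_iff θ).1 hx0
  exact main _ i rfl hi x hx
    (fun j => hsoc (X j) (Ideal.subset_span ⟨j, rfl⟩))
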